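/- arXiv:math/0401281 — 2 statements merged into one kernel-verified Lean document; each statement's English description precedes it below -/
import Mathlib

section
/- Let Q(t) = t^2 - σ^2 with σ ∈ ℂ. Then for every n ∈ ℕ and Re z > 0, (z^{2n+1}/(2n)!) ∫_0^∞ e^{-zt} Q(t)^n dt = Σ_{b=0}^n [n!(2n-2b)! / ((n-b)!(2n)!)] · (-1)^b (σz)^{2b} / b!. -/
open MeasureTheory Set Filter

private lemma integrable_aux (z : ℂ) (hz : 0 < z.re) (n : ℕ) :
    IntegrableOn (fun t : ℝ => Complex.exp (-z * t) * (t : ℂ) ^ n) (Set.Ioi 0) := by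
  have h : IntegrableOn (fun x : ℝ => x ^ (n : ℝ) * Real.exp (-z.re * x ^ (1 : ℝ)))
      (Set.Ioi 0) :=
    integrableOn_rpow_mul_exp_neg_mul_rpow (lt_of_lt_of_le neg_one_lt_zero (Nat.cast_nonneg n)) zero_lt_one hz
  refine Integrable.mono' h ?_ ?_
  · apply Continuous.aestronglyMeasurable
    exact (Complex.continuous_exp.comp (by continuity)).mul (by continuity)
  · filter_upwards [ae_restrict_mem measurableSet_Ioi] with t ht
    have ht' : (0 : ℝ) < t := ht
    rw [norm_mul, Complex.norm_exp]
    have h1 : (-z * t).re = -z.re * t := by simp [Complex.mul_re]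
    rw [h1]
    have h2 : ‖(t : ℂ) ^ n‖ = t ^ n := by
      rw [norm_pow, Complex.norm_real, Real.norm_of_nonneg ht'.le]
    rw [h2, Real.rpow_natCast, Real.rpow_one]
    rw [mul_comm]

private lemma tendsto_aux (z : ℂ) (hz : 0 < z.re) (n : ℕ) (c : ℂ) :
    Tendsto (fun t : ℝ => c * Complex.exp (-z * t) * (t : ℂ) ^ n) atTop (nhds 0) := by
  rw [tendsto_zero_iff_norm_tendsto_zero]
  have key : Tendsto (fun t : ℝ => ‖c‖ * (t ^ (n : ℝ) * Real.exp (-z.re * t)))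
      atTop (nhds (‖c‖ * 0)) :=
    (tendsto_rpow_mul_exp_neg_mul_atTop_nhds_zero n z.re hz).const_mul _
  rw [mul_zero] at key
  apply key.congr'
  filter_upwards [eventually_gt_atTop (0 : ℝ)] with t ht
  have h1 : (-z * t).re = -z.re * t := by simp [Complex.mul_re]
  have h2 : ‖(t : ℂ) ^ n‖ = t ^ n := by
    rw [norm_pow, Complex.norm_real, Real.norm_of_nonneg ht.le]
  rw [norm_mul, norm_mul, Complex.norm_exp, h1, h2,
    Real.rpow_natCast]
  ring

private lemma exp_hasDerivAt (z : ℂ) (t : ℝ) :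
    HasDerivAt (fun t : ℝ => Complex.exp (-z * t)) (-z * Complex.exp (-z * t)) t := by
  have h : HasDerivAt (fun w : ℂ => Complex.exp (-z * w)) (-z * Complex.exp (-z * t)) (t : ℂ) := by
    simpa [mul_comm] using ((hasDerivAt_id (t : ℂ)).const_mul (-z)).cexp
  exact h.comp_ofReal

private lemma laplace_pow (z : ℂ) (hz : 0 < z.re) (n : ℕ) :
    ∫ t in Set.Ioi (0 : ℝ), Complex.exp (-z * t) * (t : ℂ) ^ n
      = (Nat.factorial n : ℂ) / z ^ (n + 1) := by
  have hzne : z ≠ 0 := fun h => by simp [h] at hz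
  induction n with
  | zero =>
      have hderiv : ∀ x ∈ Set.Ici (0 : ℝ),
          HasDerivAt (fun t : ℝ => -z⁻¹ * Complex.exp (-z * t)) (Complex.exp (-z * x)) x := by
        intro x _
        have := (exp_hasDerivAt z x).const_mul (-z⁻¹)
        convert this using 1
        · rfl
        rw [← mul_assoc, neg_mul_neg, inv_mul_cancel₀ hzne, one_mul]
      have hint : IntegrableOn (fun t : ℝ => Complex.exp (-z * t)) (Set.Ioi 0) := by
        simpa using integrable_aux z hz 0
      have htend : Tendsto (fun t : ℝ => -z⁻¹ * Complex.exp (-z * t)) atTop (nhds 0) := by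
        have := tendsto_aux z hz 0 (-z⁻¹)
        simpa using this
      have := integral_Ioi_of_hasDerivAt_of_tendsto' hderiv hint htend
      simp only [pow_one, Nat.factorial_zero, Nat.cast_one]
      rw [show (∫ t in Set.Ioi (0 : ℝ), Complex.exp (-z * t) * (t : ℂ) ^ 0)
        = ∫ t in Set.Ioi (0 : ℝ), Complex.exp (-z * t) by simp]
      rw [this]
      simp [one_div]
  | succ n ih =>
      -- f t = -z⁻¹ * exp (-z t) * t^(n+1)
      -- f' t = exp(-z t) * t^(n+1) + (-z⁻¹ * exp(-z t)) * (n+1) * t^n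
      set f : ℝ → ℂ := fun t => -z⁻¹ * Complex.exp (-z * t) * (t : ℂ) ^ (n + 1) with hf
      set f' : ℝ → ℂ := fun t => Complex.exp (-z * t) * (t : ℂ) ^ (n + 1)
        + (-z⁻¹ * ((n : ℂ) + 1)) * (Complex.exp (-z * t) * (t : ℂ) ^ n) with hf'
      have hderiv : ∀ x ∈ Set.Ici (0 : ℝ), HasDerivAt f (f' x) x := by
        intro x _
        have h1 : HasDerivAt (fun t : ℝ => -z⁻¹ * Complex.exp (-z * t))
            (-z⁻¹ * (-z * Complex.exp (-z * x))) x := (exp_hasDerivAt z x).const_mul _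
        have h2 : HasDerivAt (fun t : ℝ => ((t : ℂ)) ^ (n + 1))
            (((n : ℂ) + 1) * (x : ℂ) ^ n) x := by
          have hx := (hasDerivAt_pow (n + 1) ((x : ℝ) : ℂ)).comp_ofReal
          simpa using hx
        have := h1.mul h2
        convert this using 1
        · rfl
        · rfl
        simp only [hf']
        field_simp
      have hint1 := integrable_aux z hz (n + 1)
      have hint0 := integrable_aux z hz n
      have hintf' : IntegrableOn f' (Set.Ioi 0) := hint1.add (hint0.const_mul _)
      have htend : Tendsto f atTop (nhds 0) := tendsto_aux z hz (n + 1) (-z⁻¹)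
      have key := integral_Ioi_of_hasDerivAt_of_tendsto' hderiv hintf' htend
      have hf0 : f 0 = 0 := by simp [hf]
      rw [hf0, sub_zero] at key
      have hsplit : ∫ x in Set.Ioi (0 : ℝ), f' x
          = (∫ t in Set.Ioi (0 : ℝ), Complex.exp (-z * t) * (t : ℂ) ^ (n + 1))
            + (-z⁻¹ * ((n : ℂ) + 1)) * ∫ t in Set.Ioi (0 : ℝ), Complex.exp (-z * t) * (t : ℂ) ^ n := by
        rw [integral_add hint1 (hint0.const_mul _), integral_const_mul]
      rw [key, ih] at hsplit
      have hA : (∫ t in Set.Ioi (0 : ℝ), Complex.exp (-z * t) * (t : ℂ) ^ (n + 1))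
          = z⁻¹ * ((n : ℂ) + 1) * ((Nat.factorial n : ℂ) / z ^ (n + 1)) := by
        linear_combination -hsplit
      rw [hA, Nat.factorial_succ]
      push_cast
      rw [pow_succ]
      field_simp
      ring

/-- For `Q(t) = t² - σ²`:
`(z^(2n+1)/(2n)!) ∫_0^∞ e^{-zt} Q(t)^n dt
  = ∑_{b=0}^n [n!(2n-2b)!/((n-b)!(2n)!)] (-1)^b (σz)^(2b)/b!`. -/
theorem stmt_4 (σ : ℂ) (n : ℕ) (z : ℂ) (hz : 0 < z.re) :
    z ^ (2 * n + 1) / (Nat.factorial (2 * n)) *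
      ∫ t in Set.Ioi (0 : ℝ), Complex.exp (-z * t) * ((t : ℂ) ^ 2 - σ ^ 2) ^ n =
    ∑ b ∈ Finset.range (n + 1),
      ((Nat.factorial n : ℂ) * (Nat.factorial (2 * n - 2 * b)) /
        ((Nat.factorial (n - b)) * (Nat.factorial (2 * n)))) *
        ((-1) ^ b * (σ * z) ^ (2 * b) / (Nat.factorial b)) := by
  have hzne : z ≠ 0 := fun h => by simp [h] at hz
  have expand : ∀ t : ℝ, Complex.exp (-z * t) * ((t : ℂ) ^ 2 - σ ^ 2) ^ n
      = ∑ i ∈ Finset.range (n + 1),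
          (Complex.exp (-z * t) * (t : ℂ) ^ (2 * i)) * ((-σ ^ 2) ^ (n - i) * (n.choose i : ℂ)) := by
    intro t
    rw [sub_eq_add_neg, add_pow, Finset.mul_sum]
    refine Finset.sum_congr rfl fun i _ => ?_
    rw [pow_mul]
    ring
  rw [integral_congr_ae (Filter.Eventually.of_forall expand)]
  rw [integral_finset_sum _ (fun i _ => ((integrable_aux z hz (2 * i)).mul_const _))]
  have heval : ∀ i ∈ Finset.range (n + 1),
      (∫ t in Set.Ioi (0 : ℝ),
          (Complex.exp (-z * t) * (t : ℂ) ^ (2 * i)) * ((-σ ^ 2) ^ (n - i) * (n.choose i : ℂ)))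
      = ((Nat.factorial (2 * i) : ℂ) / z ^ (2 * i + 1)) * ((-σ ^ 2) ^ (n - i) * (n.choose i : ℂ)) := by
    intro i _
    rw [integral_mul_const, laplace_pow z hz (2 * i)]
  rw [Finset.sum_congr rfl heval, Finset.mul_sum, ← Finset.sum_range_reflect]
  simp only [Nat.add_sub_cancel]
  refine Finset.sum_congr rfl fun b hb => ?_
  have hbn : b ≤ n := Nat.lt_succ_iff.mp (Finset.mem_range.mp hb)
  have h1 : n - (n - b) = b := by omega
  have h2 : n.choose (n - b) = n.choose b := Nat.choose_symm hbn
  rw [h1, h2]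
  have h3 : 2 * n - 2 * b = 2 * (n - b) := by omega
  rw [h3]
  have hchoose : ((n.choose b : ℂ)) * ((Nat.factorial b : ℂ) * (Nat.factorial (n - b) : ℂ))
      = (Nat.factorial n : ℂ) := by
    have := Nat.choose_mul_factorial_mul_factorial hbn
    push_cast [← this]
    ring
  have hzpow : z ^ (2 * n + 1) = z ^ (2 * b) * z ^ (2 * (n - b) + 1) := by
    rw [← pow_add]
    congr 1
    omega
  have hσ : (-σ ^ 2) ^ b = (-1 : ℂ) ^ b * σ ^ (2 * b) := by
    rw [neg_pow, pow_mul]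
  have hσz : (σ * z) ^ (2 * b) = σ ^ (2 * b) * z ^ (2 * b) := mul_pow _ _ _
  rw [hσ, hσz, hzpow]
  have hfac1 : ((Nat.factorial (2 * n) : ℂ)) ≠ 0 := Nat.cast_ne_zero.mpr (Nat.factorial_ne_zero _)
  have hfac2 : ((Nat.factorial (n - b) : ℂ)) ≠ 0 := Nat.cast_ne_zero.mpr (Nat.factorial_ne_zero _)
  have hfac3 : ((Nat.factorial b : ℂ)) ≠ 0 := Nat.cast_ne_zero.mpr (Nat.factorial_ne_zero _)
  have hzp : z ^ (2 * (n - b) + 1) ≠ 0 := pow_ne_zero _ hzne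
  field_simp
  linear_combination (((2 * (n - b)).factorial : ℂ)
    * σ ^ (2 * b)) * hchoose
end

section
/- Let r_1, ..., r_d ∈ ℂ and μ_k := (1/d) Σ_{i=1}^d r_i^k for k ≥ 0. Then the following are equivalent: (i) r_1 = r_2 = ⋯ = r_d; (ii) μ_j = μ_1^j for all 1 ≤ j ≤ d; (iii) μ_i^j = μ_j^i for all 1 ≤ i, j ≤ d. -/
open Finset in
lemma key_aux {d : ℕ} (s : Fin d → ℂ) (hp : ∀ j : ℕ, 1 ≤ j → j ≤ d → ∑ i, s i ^ j = 0)
    (i : Fin d) : s i = 0 := by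
  have hd : 0 < d := i.pos
  set M : Multiset ℂ := Finset.univ.val.map s with hM
  have hcard : Multiset.card M = d := by simp [hM]
  -- esymm vanish
  have hE : ∀ k : ℕ, 1 ≤ k → k ≤ d → M.esymm k = 0 := by
    intro k hk1 hkd
    have h := congrArg (MvPolynomial.aeval s) (MvPolynomial.mul_esymm_eq_sum (Fin d) ℂ k)
    simp only [map_mul, map_sum, map_pow, map_neg, map_one, map_natCast,
      MvPolynomial.aeval_esymm_eq_multiset_esymm] at h
    have hzero : ∀ a ∈ (Finset.HasAntidiagonal.antidiagonal k).filter (fun a => a.1 < k),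
        (-1:ℂ) ^ a.1 * (Multiset.map s Finset.univ.val).esymm a.1 *
          (MvPolynomial.aeval s) (MvPolynomial.psum (Fin d) ℂ a.2) = 0 := by
      intro a ha
      simp only [Finset.mem_filter, Finset.HasAntidiagonal.mem_antidiagonal] at ha
      have h2 : 1 ≤ a.2 := by omega
      have h2' : a.2 ≤ d := by omega
      have : (MvPolynomial.aeval s) (MvPolynomial.psum (Fin d) ℂ a.2) = ∑ i, s i ^ a.2 := by
        simp [MvPolynomial.psum]
      rw [this, hp a.2 h2 h2', mul_zero]
    rw [Finset.sum_eq_zero hzero, mul_zero] at h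
    have hk0 : (k : ℂ) ≠ 0 := Nat.cast_ne_zero.mpr (by omega)
    exact (mul_eq_zero.mp h).resolve_left hk0
  -- Vieta
  have hv := Multiset.prod_X_add_C_eq_sum_esymm M
  have hev := congrArg (Polynomial.eval (-(s i))) hv
  rw [Polynomial.eval_multiset_prod] at hev
  have hlhs : ((M.map fun r => Polynomial.X + Polynomial.C r).map (Polynomial.eval (-(s i)))).prod = 0 := by
    apply Multiset.prod_eq_zero
    rw [Multiset.map_map]
    refine Multiset.mem_map.mpr ⟨s i, ?_, ?_⟩
    · exact Multiset.mem_map.mpr ⟨i, Finset.mem_univ_val i, rfl⟩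
    · simp
  rw [hlhs] at hev
  rw [Polynomial.eval_finset_sum] at hev
  have hrhs : ∑ j ∈ Finset.range (Multiset.card M + 1),
      (Polynomial.C (M.esymm j) * Polynomial.X ^ (Multiset.card M - j)).eval (-(s i))
      = (-(s i)) ^ d := by
    rw [Finset.sum_eq_single 0]
    · simp [hcard, Multiset.esymm]
    · intro j hj hj0
      rw [Finset.mem_range, hcard] at hj
      simp [hE j (by omega) (by omega)]
    · intro h; simp at h
  rw [hrhs] at hev
  have : (-(s i)) ^ d = 0 := hev.symm
  have := pow_eq_zero_iff (by omega : d ≠ 0) |>.mp this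
  simpa using this

/-- Equivalence of: (i) all `r_i` equal; (ii) `μ_j = μ_1^j` for `1 ≤ j ≤ d`;
(iii) `μ_i^j = μ_j^i` for `1 ≤ i, j ≤ d`, where `μ_k = (1/d) ∑ r_i^k`. -/
theorem stmt_13 (d : ℕ) (hd : 1 ≤ d) (r : Fin d → ℂ)
    (μ : ℕ → ℂ) (hμ : ∀ k, μ k = (∑ i, r i ^ k) / d) :
    ((∀ i j : Fin d, r i = r j) ↔
      (∀ j : ℕ, 1 ≤ j → j ≤ d → μ j = (μ 1) ^ j)) ∧
    ((∀ j : ℕ, 1 ≤ j → j ≤ d → μ j = (μ 1) ^ j) ↔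
      (∀ i j : ℕ, 1 ≤ i → i ≤ d → 1 ≤ j → j ≤ d → (μ i) ^ j = (μ j) ^ i)) := by
  have hdC : (d : ℂ) ≠ 0 := Nat.cast_ne_zero.mpr (by omega)
  constructor
  · constructor
    · -- (i) → (ii)
      intro hall j hj1 hjd
      set c := r ⟨0, hd⟩ with hc
      have hμk : ∀ k, μ k = c ^ k := by
        intro k
        rw [hμ]
        have : ∀ i : Fin d, r i ^ k = c ^ k := fun i => by rw [hall i ⟨0, hd⟩]
        rw [Finset.sum_congr rfl (fun i _ => this i), Finset.sum_const, Finset.card_univ,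
          Fintype.card_fin, nsmul_eq_mul, mul_div_cancel_left₀ _ hdC]
      rw [hμk j, hμk 1, pow_one]
    · -- (ii) → (i)
      intro h2 i j
      set c := μ 1 with hc
      have hsum : ∀ k : ℕ, k ≤ d → ∑ i, r i ^ k = (d : ℂ) * c ^ k := by
        intro k hk
        rcases Nat.eq_zero_or_pos k with h0 | h0
        · subst h0; simp [Finset.card_univ]
        · have := h2 k h0 hk
          rw [hμ k, div_eq_iff hdC] at this
          rw [this]; ring
      have hs : ∀ j : ℕ, 1 ≤ j → j ≤ d → ∑ i, (r i - c) ^ j = 0 := by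
        intro j hj1 hjd
        calc ∑ i, (r i - c) ^ j
            = ∑ i, ∑ k ∈ Finset.range (j + 1), r i ^ k * (-c) ^ (j - k) * (j.choose k) := by
              simp_rw [sub_eq_add_neg, add_pow]
          _ = ∑ k ∈ Finset.range (j + 1), (∑ i, r i ^ k) * ((-c) ^ (j - k) * (j.choose k)) := by
              rw [Finset.sum_comm]
              exact Finset.sum_congr rfl fun k _ => by rw [← Finset.sum_mul, Finset.sum_mul, Finset.sum_mul]; exact Finset.sum_congr rfl fun x _ => by ring
          _ = ∑ k ∈ Finset.range (j + 1), (d : ℂ) * (c ^ k * (-c) ^ (j - k) * (j.choose k)) := by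
              refine Finset.sum_congr rfl fun k hk => ?_
              rw [Finset.mem_range] at hk
              rw [hsum k (by omega)]; ring
          _ = (d : ℂ) * ∑ k ∈ Finset.range (j + 1), c ^ k * (-c) ^ (j - k) * (j.choose k) := by
              rw [Finset.mul_sum]
          _ = (d : ℂ) * (c + -c) ^ j := by rw [add_pow]
          _ = 0 := by
              rw [add_neg_cancel, zero_pow (by omega)]; ring
      have h0 := key_aux (fun i => r i - c) hs
      have hi := sub_eq_zero.mp (h0 i)
      have hj := sub_eq_zero.mp (h0 j)
      rw [hi, hj]
  · constructor
    · intro h2 i j hi1 hid hj1 hjd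
      rw [h2 i hi1 hid, h2 j hj1 hjd, ← pow_mul, ← pow_mul, mul_comm]
    · intro h3 j hj1 hjd
      have := h3 1 j le_rfl hd hj1 hjd
      rw [pow_one] at this
      exact this.symm
end
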